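/- Let X be a δ-hyperbolic fine graph, let a, x be vertices and suppose there is a vertex c with angle at c between a and x strictly greater than (1000δ)². Then with α = 2δ, the slice S_{a,x}(d(a,c)) of U_{2δ}[a,x] at distance d(a,c) from a is exactly the singleton {c}. -/

import Mathlib

/-- A graph: vertices, oriented edges, origin/terminus maps, and a
fixed-point-free edge-reversing involution. -/
structure MGraph where
  V : Type
  E : Type
  o : E → V
  t : E → V
  rev : E → E
  rev_o : ∀ e, o (rev e) = t e
  rev_t : ∀ e, t (rev e) = o e
  rev_rev : ∀ e, rev (rev e) = e
  rev_ne : ∀ e, rev e ≠ e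

namespace MGraph

variable (X : MGraph)

/-- A walk from `x` to `y` given by a list of consecutive edges. -/
def IsWalk : List X.E → X.V → X.V → Prop
  | [], x, y => x = y
  | e :: es, x, y => X.o e = x ∧ IsWalk es (X.t e) y

/-- The vertices visited by a walk starting at `x`. -/
def walkVerts : X.V → List X.E → List X.V
  | x, [] => [x]
  | x, e :: es => x :: walkVerts (X.t e) es

/-- The graph metric (length of each edge is 1), valued in `ℕ∞`. -/
noncomputable def dist (x y : X.V) : ℕ∞ :=
  sInf {n : ℕ∞ | ∃ es, X.IsWalk es x y ∧ (es.length : ℕ∞) = n}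

/-- The distance from `x` to `y` in the graph with the vertex `v` removed. -/
noncomputable def delDist (v x y : X.V) : ℕ∞ :=
  sInf {n : ℕ∞ | ∃ es, X.IsWalk es x y ∧ v ∉ X.walkVerts x es ∧ (es.length : ℕ∞) = n}

/-- The angle at `v = t e1 = o e2` between two edges `e1, e2`: the distance
from `o e1` to `t e2` in the graph with the vertex `t e1` removed. -/
noncomputable def angle (e1 e2 : X.E) : ℕ∞ :=
  X.delDist (X.t e1) (X.o e1) (X.t e2)

/-- A geodesic is a walk whose length realizes the distance. -/
def IsGeodesic (es : List X.E) (x y : X.V) : Prop :=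
  X.IsWalk es x y ∧ (es.length : ℕ∞) = X.dist x y

/-- `∠_c(x1,x2) > θ` : there are edges `e1, e2` with `t e1 = o e2 = c`, each
lying on a geodesic between `c` and `x_i`, making an angle `> θ` at `c`. -/
def AngleGT (c x1 x2 : X.V) (θ : ℕ∞) : Prop :=
  ∃ (e1 e2 : X.E) (es1 es2 : List X.E), X.t e1 = c ∧ X.o e2 = c ∧
    X.IsGeodesic (X.rev e1 :: es1) c x1 ∧ X.IsGeodesic (e2 :: es2) c x2 ∧
    θ < X.angle e1 e2

/-- All pairs of consecutive edges of a walk make an angle at most `θ`. -/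
def AngleBounded (θ : ℕ∞) : List X.E → Prop
  | [] => True
  | [_] => True
  | e :: e' :: es => X.angle e e' ≤ θ ∧ AngleBounded θ (e' :: es)

/-- `v` is a vertex of the cone of parameter `θ` around the oriented edge `e`:
it lies on a path starting at `o e` by the edge `e`, of length at most `θ`,
whose consecutive edges make angles at most `θ`. -/
def InConeV (θ : ℕ∞) (e : X.E) (v : X.V) : Prop :=
  ∃ (es : List X.E) (y : X.V), X.IsWalk (e :: es) (X.o e) y ∧
    ((e :: es).length : ℕ∞) ≤ θ ∧ X.AngleBounded θ (e :: es) ∧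
    v ∈ X.walkVerts (X.o e) (e :: es)

/-- `ε` is an edge of the cone of parameter `θ` around the oriented edge `e`. -/
def InConeE (θ : ℕ∞) (e ε : X.E) : Prop :=
  ∃ (es : List X.E) (y : X.V), X.IsWalk (e :: es) (X.o e) y ∧
    ((e :: es).length : ℕ∞) ≤ θ ∧ X.AngleBounded θ (e :: es) ∧
    (ε ∈ e :: es ∨ X.rev ε ∈ e :: es)

/-- A graph is fine if for each edge `e` and each `L`, only finitely many
edges arrive at `o e` making an angle at most `L` with `e`. -/
def Fine : Prop :=
  ∀ (e : X.E) (L : ℕ), {e' : X.E | X.t e' = X.o e ∧ X.angle e' e ≤ (L : ℕ∞)}.Finite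

/-- δ-hyperbolicity: geodesic triangles are δ-thin. -/
def Hyperbolic (δ : ℕ) : Prop :=
  ∀ (a b c : X.V) (p q r : List X.E),
    X.IsGeodesic p a b → X.IsGeodesic q b c → X.IsGeodesic r a c →
    ∀ v ∈ X.walkVerts a p, ∃ w, (w ∈ X.walkVerts b q ∨ w ∈ X.walkVerts a r) ∧
      X.dist v w ≤ (δ : ℕ∞)

/-- The four point inequality form of δ-hyperbolicity. -/
def FourPoint (δ : ℕ) : Prop :=
  ∀ a x y y' : X.V,
    X.dist a x + X.dist y y' ≤
      max (X.dist a y + X.dist y' x) (X.dist a y' + X.dist y x) + (δ : ℕ∞)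

/-- Connectedness. -/
def Connected : Prop := ∀ x y : X.V, ∃ es, X.IsWalk es x y

/-- `t` is on an `α`-geodesic between `x` and `a`. -/
def OnAlphaGeod (α : ℕ∞) (t x a : X.V) : Prop :=
  X.dist x t + X.dist t a ≤ X.dist x a + α

/-- The set `𝓔_{a,x}(ρ)` of edges at distance `ρ` from `a` lying on
geodesics between `a` and `x`. -/
def GeodEdgeAt (a x : X.V) (ρ : ℕ∞) (e : X.E) : Prop :=
  X.dist a (X.o e) = ρ ∧ ∃ es, (X.IsGeodesic es a x ∨ X.IsGeodesic es x a) ∧ e ∈ es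

/-- The set `U_α[a,x]` of points on `α`-conical-geodesics between `x` and `a`. -/
def ConicalSet (α : ℕ) (a x : X.V) : Set X.V :=
  {t | X.OnAlphaGeod (α : ℕ∞) t x a ∧ X.dist a t ≤ X.dist a x ∧
       ∀ e, X.GeodEdgeAt a x (X.dist a t) e → X.InConeV ((40 * α : ℕ) : ℕ∞) e t}

end MGraph

namespace MGraph

variable (X : MGraph)

/-- the endpoint of a walk -/
def wEnd : X.V → List X.E → X.V
  | x, [] => x
  | _, e :: es => wEnd (X.t e) es

def wRev (es : List X.E) : List X.E := (es.map X.rev).reverse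

variable {X}

@[simp] lemma isWalk_nil {x y : X.V} : X.IsWalk [] x y ↔ x = y := Iff.rfl

@[simp] lemma isWalk_cons {e : X.E} {es : List X.E} {x y : X.V} :
    X.IsWalk (e :: es) x y ↔ X.o e = x ∧ X.IsWalk es (X.t e) y := Iff.rfl

@[simp] lemma wEnd_nil {x : X.V} : X.wEnd x [] = x := rfl

@[simp] lemma wEnd_cons {x : X.V} {e : X.E} {es : List X.E} :
    X.wEnd x (e :: es) = X.wEnd (X.t e) es := rfl

lemma IsWalk.wEnd_eq {es : List X.E} {x y : X.V} (h : X.IsWalk es x y) :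
    X.wEnd x es = y := by
  induction es generalizing x with
  | nil => exact h
  | cons e es ih => exact ih h.2

lemma wEnd_append {es1 es2 : List X.E} {x : X.V} :
    X.wEnd x (es1 ++ es2) = X.wEnd (X.wEnd x es1) es2 := by
  induction es1 generalizing x with
  | nil => rfl
  | cons e es ih => simp [ih]

lemma IsWalk.append {es1 es2 : List X.E} {x y z : X.V}
    (h1 : X.IsWalk es1 x y) (h2 : X.IsWalk es2 y z) : X.IsWalk (es1 ++ es2) x z := by
  induction es1 generalizing x with
  | nil => cases h1; exact h2
  | cons e es ih => exact ⟨h1.1, ih h1.2⟩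

lemma IsWalk.split {es1 es2 : List X.E} {x z : X.V}
    (h : X.IsWalk (es1 ++ es2) x z) :
    X.IsWalk es1 x (X.wEnd x es1) ∧ X.IsWalk es2 (X.wEnd x es1) z := by
  induction es1 generalizing x with
  | nil => exact ⟨rfl, h⟩
  | cons e es ih => exact ⟨⟨h.1, (ih h.2).1⟩, (ih h.2).2⟩

lemma IsWalk.take {es : List X.E} {x z : X.V} (h : X.IsWalk es x z) (n : ℕ) :
    X.IsWalk (es.take n) x (X.wEnd x (es.take n)) := by
  have := (es.take_append_drop n) ▸ h
  exact this.split.1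

lemma IsWalk.drop {es : List X.E} {x z : X.V} (h : X.IsWalk es x z) (n : ℕ) :
    X.IsWalk (es.drop n) (X.wEnd x (es.take n)) z := by
  have := (es.take_append_drop n) ▸ h
  exact this.split.2

@[simp] lemma walkVerts_nil {x : X.V} : X.walkVerts x [] = [x] := rfl

@[simp] lemma walkVerts_cons {x : X.V} {e : X.E} {es : List X.E} :
    X.walkVerts x (e :: es) = x :: X.walkVerts (X.t e) es := rfl

lemma walkVerts_ne_nil {x : X.V} {es : List X.E} : X.walkVerts x es ≠ [] := by
  cases es <;> simp

lemma head_walkVerts {x : X.V} {es : List X.E} :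
    (X.walkVerts x es).head walkVerts_ne_nil = x := by
  cases es <;> rfl

lemma self_mem_walkVerts {x : X.V} {es : List X.E} : x ∈ X.walkVerts x es := by
  cases es <;> simp

lemma wEnd_mem_walkVerts {x : X.V} {es : List X.E} : X.wEnd x es ∈ X.walkVerts x es := by
  induction es generalizing x with
  | nil => simp
  | cons e es ih => simp [ih]

lemma walkVerts_append {x : X.V} {es1 es2 : List X.E} :
    X.walkVerts x (es1 ++ es2)
      = X.walkVerts x es1 ++ (X.walkVerts (X.wEnd x es1) es2).tail := by
  induction es1 generalizing x with
  | nil => cases es2 <;> simp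
  | cons e es ih => simp [ih]

lemma walkVerts_eq_head_tail {x : X.V} {es : List X.E} :
    X.walkVerts x es = x :: (X.walkVerts x es).tail := by
  cases es <;> simp

lemma mem_walkVerts_append {v x : X.V} {es1 es2 : List X.E} :
    v ∈ X.walkVerts x (es1 ++ es2) ↔
      v ∈ X.walkVerts x es1 ∨ v ∈ X.walkVerts (X.wEnd x es1) es2 := by
  rw [walkVerts_append, List.mem_append]
  constructor
  · rintro (h | h)
    · exact Or.inl h
    · exact Or.inr (by rw [walkVerts_eq_head_tail]; exact List.mem_cons_of_mem _ h)
  · rintro (h | h)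
    · exact Or.inl h
    · rw [walkVerts_eq_head_tail] at h
      rcases List.mem_cons.1 h with h | h
      · exact Or.inl (h ▸ wEnd_mem_walkVerts)
      · exact Or.inr h

lemma mem_walkVerts_iff {v x : X.V} {es : List X.E} :
    v ∈ X.walkVerts x es ↔ ∃ n ≤ es.length, v = X.wEnd x (es.take n) := by
  induction es generalizing x with
  | nil => simp [eq_comm]
  | cons e es ih =>
    simp only [walkVerts_cons, List.mem_cons, ih]
    constructor
    · rintro (rfl | ⟨n, hn, rfl⟩)
      · exact ⟨0, by simp, rfl⟩
      · exact ⟨n + 1, by simpa using hn, by simp⟩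
    · rintro ⟨n, hn, rfl⟩
      cases n with
      | zero => simp
      | succ n => exact Or.inr ⟨n, by simpa using hn, by simp⟩

lemma wEnd_take_mem_walkVerts {x : X.V} {es : List X.E} (n : ℕ) :
    X.wEnd x (es.take n) ∈ X.walkVerts x es := by
  rcases le_or_gt n es.length with h | h
  · exact mem_walkVerts_iff.2 ⟨n, h, rfl⟩
  · rw [List.take_of_length_le h.le]; exact wEnd_mem_walkVerts

lemma IsWalk.wRev {es : List X.E} {x y : X.V} (h : X.IsWalk es x y) :
    X.IsWalk (X.wRev es) y x := by
  induction es generalizing x with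
  | nil => cases h; exact rfl
  | cons e es ih =>
    have h1 : X.IsWalk (X.wRev es) y (X.t e) := ih h.2
    have h2 : X.IsWalk [X.rev e] (X.t e) x := by
      simp [X.rev_o, X.rev_t, h.1]
    have := h1.append h2
    simpa [MGraph.wRev] using this

@[simp] lemma wRev_length {es : List X.E} : (X.wRev es).length = es.length := by
  simp [MGraph.wRev]

lemma IsWalk.walkVerts_wRev {es : List X.E} {x y : X.V} (h : X.IsWalk es x y) :
    X.walkVerts y (X.wRev es) = (X.walkVerts x es).reverse := by
  induction es generalizing x with
  | nil => cases h; rfl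
  | cons e es ih =>
    have h1 : X.IsWalk (X.wRev es) y (X.t e) := h.2.wRev
    have : X.wRev (e :: es) = X.wRev es ++ [X.rev e] := by simp [MGraph.wRev]
    rw [this, walkVerts_append, h1.wEnd_eq, ih h.2]
    simp [X.rev_t, h.1]

lemma dist_le_length {es : List X.E} {x y : X.V} (h : X.IsWalk es x y) :
    X.dist x y ≤ (es.length : ℕ∞) :=
  sInf_le ⟨es, h, rfl⟩

@[simp] lemma dist_self (x : X.V) : X.dist x x = 0 := by
  have := dist_le_length (es := []) (x := x) (y := x) rfl
  simpa using this

lemma exists_geodesic {x y : X.V} (h : X.dist x y ≠ ⊤) :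
    ∃ es, X.IsGeodesic es x y := by
  have hne : {n : ℕ∞ | ∃ es, X.IsWalk es x y ∧ (es.length : ℕ∞) = n}.Nonempty := by
    by_contra hc
    rw [Set.not_nonempty_iff_eq_empty] at hc
    exact h (by rw [MGraph.dist, hc, sInf_empty])
  obtain ⟨es, hw, hl⟩ := csInf_mem hne
  exact ⟨es, hw, hl⟩

lemma dist_triangle (x y z : X.V) : X.dist x z ≤ X.dist x y + X.dist y z := by
  rcases eq_or_ne (X.dist x y) ⊤ with h1 | h1
  · simp [h1]
  rcases eq_or_ne (X.dist y z) ⊤ with h2 | h2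
  · simp [h2]
  obtain ⟨es1, hw1, hl1⟩ := exists_geodesic h1
  obtain ⟨es2, hw2, hl2⟩ := exists_geodesic h2
  calc X.dist x z ≤ ((es1 ++ es2).length : ℕ∞) := dist_le_length (hw1.append hw2)
    _ = X.dist x y + X.dist y z := by rw [← hl1, ← hl2]; push_cast [List.length_append]; ring

lemma dist_comm_le (x y : X.V) : X.dist x y ≤ X.dist y x := by
  rcases eq_or_ne (X.dist y x) ⊤ with h | h
  · simp [h]
  obtain ⟨es, hw, hl⟩ := exists_geodesic h
  calc X.dist x y ≤ ((X.wRev es).length : ℕ∞) := dist_le_length hw.wRev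
    _ = X.dist y x := by rw [wRev_length, hl]

lemma dist_comm (x y : X.V) : X.dist x y = X.dist y x :=
  le_antisymm (dist_comm_le x y) (dist_comm_le y x)

lemma delDist_le_length {es : List X.E} {c x y : X.V} (h : X.IsWalk es x y)
    (hc : c ∉ X.walkVerts x es) : X.delDist c x y ≤ (es.length : ℕ∞) :=
  sInf_le ⟨es, h, hc, rfl⟩

lemma exists_walk_of_delDist_ne_top {c x y : X.V} (h : X.delDist c x y ≠ ⊤) :
    ∃ es, X.IsWalk es x y ∧ c ∉ X.walkVerts x es ∧ (es.length : ℕ∞) = X.delDist c x y := by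
  have hne : {n : ℕ∞ | ∃ es, X.IsWalk es x y ∧ c ∉ X.walkVerts x es ∧
      (es.length : ℕ∞) = n}.Nonempty := by
    by_contra hc
    rw [Set.not_nonempty_iff_eq_empty] at hc
    exact h (by rw [MGraph.delDist, hc, sInf_empty])
  obtain ⟨es, hw, hc', hl⟩ := csInf_mem hne
  exact ⟨es, hw, hc', hl⟩

lemma enat_add_split {a b : ℕ} {u v : ℕ∞} (hu : u ≤ (a : ℕ∞)) (hv : v ≤ (b : ℕ∞))
    (h : ((a + b : ℕ) : ℕ∞) ≤ u + v) : u = a ∧ v = b := by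
  lift u to ℕ using ne_top_of_le_ne_top (by simp) hu
  lift v to ℕ using ne_top_of_le_ne_top (by simp) hv
  rw [Nat.cast_le] at hu hv
  rw [show ((u:ℕ∞) + v) = ((u + v : ℕ) : ℕ∞) by push_cast; ring, Nat.cast_le] at h
  constructor <;> [skip; skip] <;> rw [Nat.cast_inj] <;> omega

lemma IsGeodesic.split {es1 es2 : List X.E} {x y : X.V}
    (h : X.IsGeodesic (es1 ++ es2) x y) :
    X.IsGeodesic es1 x (X.wEnd x es1) ∧ X.IsGeodesic es2 (X.wEnd x es1) y := by
  obtain ⟨hw, hl⟩ := h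
  obtain ⟨hw1, hw2⟩ := hw.split
  have d1 : X.dist x (X.wEnd x es1) ≤ (es1.length : ℕ∞) := dist_le_length hw1
  have d2 : X.dist (X.wEnd x es1) y ≤ (es2.length : ℕ∞) := dist_le_length hw2
  have htot : ((es1.length + es2.length : ℕ) : ℕ∞) ≤
      X.dist x (X.wEnd x es1) + X.dist (X.wEnd x es1) y := by
    calc ((es1.length + es2.length : ℕ) : ℕ∞) = ((es1 ++ es2).length : ℕ∞) := by
          simp
      _ = X.dist x y := hl
      _ ≤ _ := dist_triangle _ _ _
  obtain ⟨h1, h2⟩ := enat_add_split d1 d2 htot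
  exact ⟨⟨hw1, h1.symm⟩, ⟨hw2, h2.symm⟩⟩

lemma IsGeodesic.dist_ne_top {es : List X.E} {x y : X.V} (h : X.IsGeodesic es x y) :
    X.dist x y ≠ ⊤ := by rw [← h.2]; simp

lemma IsGeodesic.take {es : List X.E} {x y : X.V} (h : X.IsGeodesic es x y) (n : ℕ) :
    X.IsGeodesic (es.take n) x (X.wEnd x (es.take n)) := by
  have := (es.take_append_drop n) ▸ h
  exact this.split.1

lemma IsGeodesic.drop {es : List X.E} {x y : X.V} (h : X.IsGeodesic es x y) (n : ℕ) :
    X.IsGeodesic (es.drop n) (X.wEnd x (es.take n)) y := by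
  have := (es.take_append_drop n) ▸ h
  exact this.split.2

/-- distance from start to position `n` of a geodesic -/
lemma IsGeodesic.dist_take {es : List X.E} {x y : X.V} (h : X.IsGeodesic es x y)
    {n : ℕ} (hn : n ≤ es.length) : X.dist x (X.wEnd x (es.take n)) = (n : ℕ∞) := by
  have := (h.take n).2
  rw [← this, List.length_take, min_eq_left hn]

lemma IsGeodesic.dist_drop {es : List X.E} {x y : X.V} (h : X.IsGeodesic es x y)
    {n : ℕ} (hn : n ≤ es.length) :
    X.dist (X.wEnd x (es.take n)) y = ((es.length - n : ℕ) : ℕ∞) := by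
  have := (h.drop n).2
  rw [← this, List.length_drop]

/-- on a geodesic, the position of a vertex is its distance from the start -/
lemma IsGeodesic.mem_pos {es : List X.E} {x y v : X.V} (h : X.IsGeodesic es x y)
    (hv : v ∈ X.walkVerts x es) :
    ∃ n ≤ es.length, v = X.wEnd x (es.take n) ∧ X.dist x v = (n : ℕ∞) := by
  obtain ⟨n, hn, rfl⟩ := mem_walkVerts_iff.1 hv
  exact ⟨n, hn, rfl, h.dist_take hn⟩

lemma IsGeodesic.reverse {es : List X.E} {x y : X.V} (h : X.IsGeodesic es x y) :
    X.IsGeodesic (X.wRev es) y x :=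
  ⟨h.1.wRev, by rw [wRev_length, h.2, dist_comm]⟩

/-- a geodesic starting at `c` only visits `c` at the start -/
lemma IsGeodesic.start_not_mem_tail {es : List X.E} {c y v : X.V}
    (h : X.IsGeodesic es c y) (hv : v ∈ X.walkVerts c es) (hvc : v ≠ c) :
    (0 : ℕ∞) < X.dist c v := by
  rcases h.mem_pos hv with ⟨n, hn, hv', hd⟩
  rcases Nat.eq_zero_or_pos n with rfl | hpos
  · simp at hv'; exact absurd hv' hvc
  · rw [hd]; exact_mod_cast hpos

lemma wEnd_take_add {x : X.V} {es : List X.E} (i n : ℕ) :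
    X.wEnd x (es.take (i + n)) = X.wEnd (X.wEnd x (es.take i)) ((es.drop i).take n) := by
  rw [List.take_add, wEnd_append]

/-- the segment of a walk between positions `i ≤ j`. -/
def wSeg (i j : ℕ) (es : List X.E) : List X.E := (es.drop i).take (j - i)

lemma wSeg_isWalk {es : List X.E} {x y : X.V} (h : X.IsWalk es x y) {i j : ℕ}
    (hij : i ≤ j) :
    X.IsWalk (wSeg i j es) (X.wEnd x (es.take i)) (X.wEnd x (es.take j)) := by
  have h1 := (h.drop i).take (j - i)
  have : X.wEnd (X.wEnd x (es.take i)) ((es.drop i).take (j - i))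
      = X.wEnd x (es.take j) := by
    rw [← wEnd_take_add, Nat.add_sub_cancel' hij]
  rw [wSeg, ← this]
  exact h1

lemma wSeg_length {es : List X.E} {i j : ℕ} (hj : j ≤ es.length) :
    (wSeg i j es).length = j - i := by
  simp [wSeg]
  omega

lemma wSeg_mem {es : List X.E} {x v : X.V} {i j : ℕ} (hij : i ≤ j) (hj : j ≤ es.length)
    (hv : v ∈ X.walkVerts (X.wEnd x (es.take i)) (wSeg i j es)) :
    ∃ k, i ≤ k ∧ k ≤ j ∧ v = X.wEnd x (es.take k) := by
  obtain ⟨n, hn, rfl⟩ := mem_walkVerts_iff.1 hv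
  rw [wSeg_length hj] at hn
  refine ⟨i + n, by omega, by omega, ?_⟩
  rw [wEnd_take_add]
  congr 1
  rw [wSeg, List.take_take, min_eq_left hn]

lemma dist_le_of_mem_walkVerts {es : List X.E} {x y v : X.V} (h : X.IsWalk es x y)
    (hv : v ∈ X.walkVerts x es) : X.dist x v ≤ (es.length : ℕ∞) := by
  obtain ⟨n, hn, rfl⟩ := mem_walkVerts_iff.1 hv
  calc X.dist x (X.wEnd x (es.take n)) ≤ ((es.take n).length : ℕ∞) :=
        dist_le_length (h.take n)
    _ ≤ (es.length : ℕ∞) := by simp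

/-- an edge on a walk, with its position data -/
lemma mem_walk_edge {es : List X.E} {x y : X.V} {e : X.E} (h : X.IsWalk es x y)
    (he : e ∈ es) :
    ∃ l1 l2, es = l1 ++ e :: l2 ∧ X.o e = X.wEnd x l1 ∧
      X.wEnd x (l1 ++ [e]) = X.t e := by
  obtain ⟨l1, l2, rfl⟩ := List.append_of_mem he
  have h1 := h.split
  refine ⟨l1, l2, rfl, h1.2.1, ?_⟩
  rw [wEnd_append]
  simp

variable (X) in
/-- there is a walk from `x` to `y` of length at most `n` avoiding `c`. -/
def AvoidWalk (c x y : X.V) (n : ℕ) : Prop :=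
  ∃ es, X.IsWalk es x y ∧ c ∉ X.walkVerts x es ∧ es.length ≤ n

namespace AvoidWalk

lemma refl {c x : X.V} (h : x ≠ c) (n : ℕ) : AvoidWalk X c x x n :=
  ⟨[], rfl, by simp [Ne.symm h], by simp⟩

lemma mono {c x y : X.V} {m n : ℕ} (hmn : m ≤ n) (h : AvoidWalk X c x y m) :
    AvoidWalk X c x y n := by
  obtain ⟨es, h1, h2, h3⟩ := h
  exact ⟨es, h1, h2, h3.trans hmn⟩

lemma trans {c x y z : X.V} {m n : ℕ} (h1 : AvoidWalk X c x y m)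
    (h2 : AvoidWalk X c y z n) : AvoidWalk X c x z (m + n) := by
  obtain ⟨es1, hw1, hc1, hl1⟩ := h1
  obtain ⟨es2, hw2, hc2, hl2⟩ := h2
  refine ⟨es1 ++ es2, hw1.append hw2, ?_, by simp; omega⟩
  rw [mem_walkVerts_append, hw1.wEnd_eq]
  rintro (h | h) <;> [exact hc1 h; exact hc2 h]

lemma symm {c x y : X.V} {n : ℕ} (h : AvoidWalk X c x y n) : AvoidWalk X c y x n := by
  obtain ⟨es, hw, hc, hl⟩ := h
  refine ⟨X.wRev es, hw.wRev, ?_, by simpa using hl⟩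
  rw [hw.walkVerts_wRev]
  simpa using hc

lemma delDist_le {c x y : X.V} {n : ℕ} (h : AvoidWalk X c x y n) :
    X.delDist c x y ≤ (n : ℕ∞) := by
  obtain ⟨es, hw, hc, hl⟩ := h
  exact (delDist_le_length hw hc).trans (by exact_mod_cast hl)

end AvoidWalk

lemma avoidWalk_of_delDist_le {c x y : X.V} {n : ℕ} (h : X.delDist c x y ≤ (n : ℕ∞)) :
    AvoidWalk X c x y n := by
  obtain ⟨es, hw, hc, hl⟩ := exists_walk_of_delDist_ne_top
    (ne_top_of_le_ne_top (by simp) h)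
  refine ⟨es, hw, hc, ?_⟩
  have : (es.length : ℕ∞) ≤ (n : ℕ∞) := hl.symm ▸ hl ▸ (hl.le.trans h)
  exact_mod_cast this

/-- a hop: a short geodesic far from `c` avoids `c`. -/
lemma hop_avoid {c v w : X.V} {n : ℕ} (hd : X.dist v w ≤ (n : ℕ∞))
    (hc : (n : ℕ∞) < X.dist c v) : AvoidWalk X c v w n := by
  obtain ⟨es, hw, hl⟩ := exists_geodesic (x := v) (y := w)
    (ne_top_of_le_ne_top (by simp) hd)
  have hlen : (es.length : ℕ∞) ≤ (n : ℕ∞) := hl ▸ hd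
  refine ⟨es, hw, fun hmem => ?_, by exact_mod_cast hlen⟩
  have h1 : X.dist v c ≤ (n : ℕ∞) := (dist_le_of_mem_walkVerts hw hmem).trans hlen
  rw [dist_comm] at h1
  exact absurd (hc.trans_le h1) (by simp)

/-- segments (not containing the start) of geodesics starting at `c` avoid `c`. -/
lemma geod_seg_avoid {c y : X.V} {es : List X.E} (h : X.IsGeodesic es c y)
    {i j : ℕ} (hi : 1 ≤ i) (hij : i ≤ j) (hj : j ≤ es.length) :
    AvoidWalk X c (X.wEnd c (es.take i)) (X.wEnd c (es.take j)) (j - i) := by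
  refine ⟨wSeg i j es, wSeg_isWalk h.1 hij, fun hmem => ?_, by rw [wSeg_length hj]⟩
  obtain ⟨k, hik, hkj, hk⟩ := wSeg_mem hij hj hmem
  have := h.dist_take (hkj.trans hj)
  rw [← hk, dist_self] at this
  have : k = 0 := by exact_mod_cast this.symm
  omega

/-- segments of walks avoiding `c` avoid `c`. -/
lemma walk_seg_avoid {x y c : X.V} {es : List X.E} (h : X.IsWalk es x y)
    (hc : c ∉ X.walkVerts x es) {i j : ℕ} (hij : i ≤ j) (hj : j ≤ es.length) :
    AvoidWalk X c (X.wEnd x (es.take i)) (X.wEnd x (es.take j)) (j - i) := by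
  refine ⟨wSeg i j es, wSeg_isWalk h hij, fun hmem => ?_, by rw [wSeg_length hj]⟩
  obtain ⟨k, hik, hkj, hk⟩ := wSeg_mem hij hj hmem
  exact hc (hk ▸ wEnd_take_mem_walkVerts k)

lemma angleBounded_tail {θ : ℕ∞} {e : X.E} {es : List X.E}
    (h : X.AngleBounded θ (e :: es)) : X.AngleBounded θ es := by
  cases es with
  | nil => trivial
  | cons f rest => exact h.2

lemma angleBounded_take {θ : ℕ∞} : ∀ {es : List X.E} {n : ℕ},
    X.AngleBounded θ es → X.AngleBounded θ (es.take n) := by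
  intro es
  induction es with
  | nil => intro n h; simpa using h
  | cons e es ih =>
    intro n h
    cases n with
    | zero => trivial
    | succ n =>
      cases es with
      | nil => simpa using h
      | cons f rest =>
        cases n with
        | zero => trivial
        | succ m => exact ⟨h.1, ih (n := m + 1) h.2⟩

/-- Detour lemma: a walk with bounded angles whose endpoints differ from `c`
can be rerouted to avoid `c`, multiplying its length by at most `θ`. -/
lemma detour (c : X.V) {θ : ℕ} (hθ : 1 ≤ θ) :
    ∀ n (es : List X.E) (y z : X.V), es.length ≤ n → X.IsWalk es y z →
      X.AngleBounded (θ : ℕ∞) es → y ≠ c → z ≠ c →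
      AvoidWalk X c y z (θ * es.length) := by
  intro n
  induction n with
  | zero =>
    intro es y z hlen hw _ hy _
    match es with
    | [] => cases hw; exact AvoidWalk.refl hy _
  | succ n ih =>
    intro es y z hlen hw hab hy hz
    match es with
    | [] => cases hw; exact AvoidWalk.refl hy _
    | e0 :: rest =>
      by_cases hte : X.t e0 = c
      · match rest with
        | [] => exact absurd (hte ▸ hw.2 : (X.t e0 : X.V) = z) (hte ▸ fun hh => hz hh.symm)
        | f :: rest' =>
          have h1 : X.angle e0 f ≤ (θ : ℕ∞) := hab.1
          have h2 : X.AngleBounded (θ : ℕ∞) rest' := angleBounded_tail hab.2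
          have hdel : X.delDist c y (X.t f) ≤ (θ : ℕ∞) := by
            have : X.angle e0 f = X.delDist c (X.o e0) (X.t f) := by
              rw [MGraph.angle, hte]
            rw [this, hw.1] at h1
            exact h1
          have haw1 : AvoidWalk X c y (X.t f) θ := avoidWalk_of_delDist_le hdel
          have htf : X.t f ≠ c := by
            obtain ⟨es', hw', hc', _⟩ := haw1
            intro hh
            exact hc' (hh ▸ hw'.wEnd_eq ▸ wEnd_mem_walkVerts)
          have hw2 : X.IsWalk rest' (X.t f) z := hw.2.2
          have haw2 := ih rest' (X.t f) z (by simp at hlen ⊢; omega) hw2 h2 htf hz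
          have := haw1.trans haw2
          exact this.mono (by simp; nlinarith)
      · have haw1 : AvoidWalk X c y (X.t e0) 1 := by
          refine ⟨[e0], by simp [hw.1], ?_, by simp⟩
          simp [hw.1]
          exact ⟨Ne.symm hy, Ne.symm hte⟩
        have haw2 := ih rest (X.t e0) z (by simp at hlen; omega) hw.2
          (angleBounded_tail hab) hte hz
        exact (haw1.trans haw2).mono (by simp; nlinarith)

section Main

variable {δ : ℕ} {a x c : X.V} {e1 e2 : X.E} {es1 es2 : List X.E}

lemma v1_g1 (hg1 : X.IsGeodesic (X.rev e1 :: es1) c a) :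
    X.wEnd c ((X.rev e1 :: es1).take 1) = X.o e1 := by
  simp [X.rev_t]

lemma v1_g2 (hg2 : X.IsGeodesic (e2 :: es2) c x) :
    X.wEnd c ((e2 :: es2).take 1) = X.t e2 := by
  simp

lemma ang_contra (ht1 : X.t e1 = c)
    (hang : (((1000 * δ) ^ 2 : ℕ) : ℕ∞) < X.angle e1 e2)
    {n : ℕ} (hn : n ≤ (1000 * δ) ^ 2) (h : AvoidWalk X c (X.o e1) (X.t e2) n) :
    False := by
  have h1 := h.delDist_le
  have h2 : X.angle e1 e2 ≤ (((1000 * δ) ^ 2 : ℕ) : ℕ∞) := by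
    rw [MGraph.angle, ht1]
    exact h1.trans (by exact_mod_cast hn)
  exact absurd (hang.trans_le h2) (lt_irrefl _)

lemma le_theta {δ n : ℕ} (hδpos : 0 < δ) (h : n ≤ 200 * δ) : n ≤ (1000 * δ) ^ 2 := by
  have h2 : δ ≤ δ * δ := Nat.le_mul_of_pos_left δ hδpos
  have h3 : (1000 * δ) ^ 2 = 1000000 * (δ * δ) := by ring
  have h4 : 200 * δ ≤ 1000000 * (δ * δ) := Nat.mul_le_mul (by norm_num) h2
  omega

lemma geo_through (hδpos : 0 < δ) (hyp : X.Hyperbolic δ)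
    (ht1 : X.t e1 = c)
    (hg1 : X.IsGeodesic (X.rev e1 :: es1) c a)
    (hg2 : X.IsGeodesic (e2 :: es2) c x)
    (hang : (((1000 * δ) ^ 2 : ℕ) : ℕ∞) < X.angle e1 e2)
    {γ : List X.E} (hγ : X.IsGeodesic γ a x) : c ∈ X.walkVerts a γ := by
  by_contra hcγ
  set g1 : List X.E := X.rev e1 :: es1 with hg1e
  set g2 : List X.E := e2 :: es2 with hg2e
  set L1 := g1.length with hL1e
  set L2 := g2.length with hL2e
  have hL1 : 1 ≤ L1 := by simp [hL1e, hg1e]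
  have hL2 : 1 ≤ L2 := by simp [hL2e, hg2e]
  -- Part 1 : a point `m` on `γ` reachable from `o e1` avoiding `c`
  have part1 : ∃ m p, p ≤ γ.length ∧ m = X.wEnd a (γ.take p) ∧
      AvoidWalk X c (X.o e1) m (3 * δ + 1) ∧ X.dist c m ≤ ((3 * δ + 1 : ℕ) : ℕ∞) := by
    rcases le_or_gt L1 (2 * δ + 1) with hsmall | hbig
    · refine ⟨a, 0, Nat.zero_le _, by simp, ?_, ?_⟩
      · have h1 := geod_seg_avoid hg1 (le_refl 1) hL1 (le_refl L1)
        rw [v1_g1 hg1, List.take_length, hg1.1.wEnd_eq] at h1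
        exact h1.mono (by omega)
      · rw [← hg1.2]
        exact_mod_cast (by omega : L1 ≤ 3 * δ + 1)
    · set v := X.wEnd c (g1.take (2 * δ + 1)) with hv
      have hdcv : X.dist c v = ((2 * δ + 1 : ℕ) : ℕ∞) := hg1.dist_take hbig.le
      obtain ⟨w, hw_or, hdvw⟩ := hyp c a x g1 γ g2 hg1 hγ hg2 v (wEnd_take_mem_walkVerts _)
      have hseg1 : AvoidWalk X c (X.o e1) v (2 * δ) := by
        have h1 := geod_seg_avoid hg1 (le_refl 1) (by omega : 1 ≤ 2 * δ + 1) hbig.le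
        rw [v1_g1 hg1] at h1
        exact h1.mono (by omega)
      have hhop : AvoidWalk X c v w δ :=
        hop_avoid hdvw (by rw [hdcv]; exact_mod_cast (by omega : δ < 2 * δ + 1))
      rcases hw_or with hwγ | hwg2
      · obtain ⟨p, hp, hwp, _⟩ := hγ.mem_pos hwγ
        refine ⟨w, p, hp, hwp, (hseg1.trans hhop).mono (by omega), ?_⟩
        calc X.dist c w ≤ X.dist c v + X.dist v w := dist_triangle _ _ _
          _ ≤ ((2 * δ + 1 : ℕ) : ℕ∞) + (δ : ℕ∞) :=
              add_le_add hdcv.le hdvw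
          _ = ((3 * δ + 1 : ℕ) : ℕ∞) := by push_cast; ring
      · exfalso
        obtain ⟨k, hk, hwk, hdcw⟩ := hg2.mem_pos hwg2
        have hkb : ((2 * δ + 1 : ℕ) : ℕ∞) ≤ ((k + δ : ℕ) : ℕ∞) := by
          calc ((2 * δ + 1 : ℕ) : ℕ∞) = X.dist c v := hdcv.symm
            _ ≤ X.dist c w + X.dist w v := dist_triangle _ _ _
            _ ≤ (k : ℕ∞) + (δ : ℕ∞) :=
                add_le_add hdcw.le ((dist_comm w v).trans_le hdvw)
            _ = ((k + δ : ℕ) : ℕ∞) := by push_cast; ring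
        have hkb' : δ + 1 ≤ k := by
          have := Nat.cast_le.mp hkb; omega
        have hkub : ((k : ℕ) : ℕ∞) ≤ ((3 * δ + 1 : ℕ) : ℕ∞) := by
          calc ((k : ℕ) : ℕ∞) = X.dist c w := hdcw.symm
            _ ≤ X.dist c v + X.dist v w := dist_triangle _ _ _
            _ ≤ ((2 * δ + 1 : ℕ) : ℕ∞) + (δ : ℕ∞) :=
                add_le_add hdcv.le hdvw
            _ = ((3 * δ + 1 : ℕ) : ℕ∞) := by push_cast; ring
        have hkub' : k ≤ 3 * δ + 1 := Nat.cast_le.mp hkub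
        have hseg2 : AvoidWalk X c w (X.t e2) (k - 1) := by
          have h1 := geod_seg_avoid hg2 (le_refl 1) (by omega : 1 ≤ k) hk
          rw [v1_g2 hg2, ← hwk] at h1
          exact h1.symm
        exact ang_contra ht1 hang (le_theta hδpos (by omega) : 2 * δ + δ + (k - 1) ≤ (1000 * δ) ^ 2)
          ((hseg1.trans hhop).trans hseg2)
  -- Part 2 : a point `m'` on `γ` from which `t e2` is reachable avoiding `c`
  have part2 : ∃ m' p', p' ≤ γ.length ∧ m' = X.wEnd a (γ.take p') ∧
      AvoidWalk X c m' (X.t e2) (3 * δ + 1) ∧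
      X.dist c m' ≤ ((3 * δ + 1 : ℕ) : ℕ∞) := by
    rcases le_or_gt L2 (2 * δ + 1) with hsmall | hbig
    · refine ⟨x, γ.length, le_refl _, by rw [List.take_length, hγ.1.wEnd_eq], ?_, ?_⟩
      · have h1 := geod_seg_avoid hg2 (le_refl 1) hL2 (le_refl L2)
        rw [v1_g2 hg2, List.take_length, hg2.1.wEnd_eq] at h1
        exact h1.symm.mono (by omega)
      · rw [← hg2.2]
        exact_mod_cast (by omega : L2 ≤ 3 * δ + 1)
    · set v := X.wEnd c (g2.take (2 * δ + 1)) with hv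
      have hdcv : X.dist c v = ((2 * δ + 1 : ℕ) : ℕ∞) := hg2.dist_take hbig.le
      obtain ⟨w, hw_or, hdvw⟩ := hyp c x a g2 (X.wRev γ) g1 hg2 hγ.reverse hg1 v
        (wEnd_take_mem_walkVerts _)
      have hseg1 : AvoidWalk X c v (X.t e2) (2 * δ) := by
        have h1 := geod_seg_avoid hg2 (le_refl 1) (by omega : 1 ≤ 2 * δ + 1) hbig.le
        rw [v1_g2 hg2] at h1
        exact h1.symm.mono (by omega)
      have hhop : AvoidWalk X c w v δ :=
        (hop_avoid hdvw (by rw [hdcv]; exact_mod_cast (by omega : δ < 2 * δ + 1))).symm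
      rcases hw_or with hwγ | hwg1
      · have hwγ' : w ∈ X.walkVerts a γ := by
          rw [hγ.1.walkVerts_wRev, List.mem_reverse] at hwγ
          exact hwγ
        obtain ⟨p, hp, hwp, _⟩ := hγ.mem_pos hwγ'
        refine ⟨w, p, hp, hwp, (hhop.trans hseg1).mono (by omega), ?_⟩
        calc X.dist c w ≤ X.dist c v + X.dist v w := dist_triangle _ _ _
          _ ≤ ((2 * δ + 1 : ℕ) : ℕ∞) + (δ : ℕ∞) :=
              add_le_add hdcv.le hdvw
          _ = ((3 * δ + 1 : ℕ) : ℕ∞) := by push_cast; ring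
      · exfalso
        obtain ⟨k, hk, hwk, hdcw⟩ := hg1.mem_pos hwg1
        have hkb : ((2 * δ + 1 : ℕ) : ℕ∞) ≤ ((k + δ : ℕ) : ℕ∞) := by
          calc ((2 * δ + 1 : ℕ) : ℕ∞) = X.dist c v := hdcv.symm
            _ ≤ X.dist c w + X.dist w v := dist_triangle _ _ _
            _ ≤ (k : ℕ∞) + (δ : ℕ∞) :=
                add_le_add hdcw.le ((dist_comm w v).trans_le hdvw)
            _ = ((k + δ : ℕ) : ℕ∞) := by push_cast; ring
        have hkb' : δ + 1 ≤ k := by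
          have := Nat.cast_le.mp hkb; omega
        have hkub : ((k : ℕ) : ℕ∞) ≤ ((3 * δ + 1 : ℕ) : ℕ∞) := by
          calc ((k : ℕ) : ℕ∞) = X.dist c w := hdcw.symm
            _ ≤ X.dist c v + X.dist v w := dist_triangle _ _ _
            _ ≤ ((2 * δ + 1 : ℕ) : ℕ∞) + (δ : ℕ∞) :=
                add_le_add hdcv.le hdvw
            _ = ((3 * δ + 1 : ℕ) : ℕ∞) := by push_cast; ring
        have hkub' : k ≤ 3 * δ + 1 := Nat.cast_le.mp hkub
        have hseg2 : AvoidWalk X c (X.o e1) w (k - 1) := by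
          have h1 := geod_seg_avoid hg1 (le_refl 1) (by omega : 1 ≤ k) hk
          rw [v1_g1 hg1, ← hwk] at h1
          exact h1
        exact ang_contra ht1 hang
          (le_theta hδpos (by omega) : (k - 1) + δ + 2 * δ ≤ (1000 * δ) ^ 2)
          ((hseg2.trans hhop).trans hseg1)
  -- Part 3 : combine
  obtain ⟨m, p, hple, hm, haw1, hcm⟩ := part1
  obtain ⟨m', p', hple', hm', haw2, hcm'⟩ := part2
  have hdmm : X.dist m m' ≤ ((6 * δ + 2 : ℕ) : ℕ∞) := by
    calc X.dist m m' ≤ X.dist m c + X.dist c m' := dist_triangle _ _ _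
      _ ≤ ((3 * δ + 1 : ℕ) : ℕ∞) + ((3 * δ + 1 : ℕ) : ℕ∞) := by
          rw [dist_comm]; exact add_le_add hcm hcm'
      _ = ((6 * δ + 2 : ℕ) : ℕ∞) := by push_cast; ring
  have hdam : X.dist a m = (p : ℕ∞) := by rw [hm]; exact hγ.dist_take hple
  have hdam' : X.dist a m' = (p' : ℕ∞) := by rw [hm']; exact hγ.dist_take hple'
  have hp1 : (p' : ℕ∞) ≤ ((p + (6 * δ + 2) : ℕ) : ℕ∞) := by
    calc (p' : ℕ∞) = X.dist a m' := hdam'.symm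
      _ ≤ X.dist a m + X.dist m m' := dist_triangle _ _ _
      _ ≤ (p : ℕ∞) + ((6 * δ + 2 : ℕ) : ℕ∞) := add_le_add hdam.le hdmm
      _ = ((p + (6 * δ + 2) : ℕ) : ℕ∞) := by push_cast; ring
  have hp2 : (p : ℕ∞) ≤ ((p' + (6 * δ + 2) : ℕ) : ℕ∞) := by
    calc (p : ℕ∞) = X.dist a m := hdam.symm
      _ ≤ X.dist a m' + X.dist m' m := dist_triangle _ _ _
      _ ≤ (p' : ℕ∞) + ((6 * δ + 2 : ℕ) : ℕ∞) :=
          add_le_add hdam'.le ((dist_comm m' m).trans_le hdmm)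
      _ = ((p' + (6 * δ + 2) : ℕ) : ℕ∞) := by push_cast; ring
  have hp1' : p' ≤ p + (6 * δ + 2) := Nat.cast_le.mp hp1
  have hp2' : p ≤ p' + (6 * δ + 2) := Nat.cast_le.mp hp2
  have hseg : AvoidWalk X c m m' (6 * δ + 2) := by
    rcases le_total p p' with hpp | hpp
    · have h1 := walk_seg_avoid hγ.1 hcγ hpp hple'
      rw [← hm, ← hm'] at h1
      exact h1.mono (by omega)
    · have h1 := walk_seg_avoid hγ.1 hcγ hpp hple
      rw [← hm, ← hm'] at h1
      exact h1.symm.mono (by omega)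
  exact ang_contra ht1 hang
    (le_theta hδpos (by omega) : (3 * δ + 1) + ((6 * δ + 2) + (3 * δ + 1)) ≤ (1000 * δ) ^ 2)
    (haw1.trans (hseg.trans haw2))

lemma dist_ax (hδpos : 0 < δ) (hyp : X.Hyperbolic δ)
    (ht1 : X.t e1 = c)
    (hg1 : X.IsGeodesic (X.rev e1 :: es1) c a)
    (hg2 : X.IsGeodesic (e2 :: es2) c x)
    (hang : (((1000 * δ) ^ 2 : ℕ) : ℕ∞) < X.angle e1 e2) :
    X.dist a x = X.dist a c + X.dist c x := by
  have hfin : X.dist a x ≠ ⊤ := by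
    refine ne_top_of_le_ne_top ?_ (dist_triangle a c x)
    rw [dist_comm a c, ← hg1.2, ← hg2.2]
    push_cast
    simp [← Nat.cast_add]
  obtain ⟨γ, hγ⟩ := exists_geodesic hfin
  have hc := geo_through hδpos hyp ht1 hg1 hg2 hang hγ
  obtain ⟨n, hn, hcn, hdan⟩ := hγ.mem_pos hc
  have h2 : X.dist c x = ((γ.length - n : ℕ) : ℕ∞) := by
    rw [hcn]; exact hγ.dist_drop hn
  rw [← hγ.2, hdan, h2, ← Nat.cast_add, Nat.add_sub_cancel' hn]

lemma geodEdge_origin (hδpos : 0 < δ) (hyp : X.Hyperbolic δ)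
    (ht1 : X.t e1 = c)
    (hg1 : X.IsGeodesic (X.rev e1 :: es1) c a)
    (hg2 : X.IsGeodesic (e2 :: es2) c x)
    (hang : (((1000 * δ) ^ 2 : ℕ) : ℕ∞) < X.angle e1 e2)
    {e : X.E} {es : List X.E}
    (hor : X.IsGeodesic es a x ∨ X.IsGeodesic es x a) (hmem : e ∈ es)
    (hde : X.dist a (X.o e) = X.dist a c) : X.o e = c := by
  rcases hor with hax | hxa
  · obtain ⟨l1, l2, rfl, hoe, -⟩ := mem_walk_edge hax.1 hmem
    have hs1 : X.IsGeodesic l1 a (X.wEnd a l1) := hax.split.1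
    have hc := geo_through hδpos hyp ht1 hg1 hg2 hang hax
    obtain ⟨n, hn, hcn, hdan⟩ := hax.mem_pos hc
    have hl1 : (l1.length : ℕ∞) = (n : ℕ∞) := by
      rw [hs1.2, ← hoe, hde, hdan]
    have hl1' : l1.length = n := by exact_mod_cast hl1
    rw [hoe, hcn, ← hl1', List.take_left]
  · obtain ⟨l1, l2, rfl, hoe, -⟩ := mem_walk_edge hxa.1 hmem
    have hs2 : X.IsGeodesic (e :: l2) (X.wEnd x l1) a := hxa.split.2
    -- c is on the reversed geodesic
    have hc : c ∈ X.walkVerts x (l1 ++ e :: l2) := by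
      have h1 := geo_through hδpos hyp ht1 hg1 hg2 hang hxa.reverse
      rw [hxa.1.walkVerts_wRev, List.mem_reverse] at h1
      exact h1
    obtain ⟨n, hn, hcn, hdxc⟩ := hxa.mem_pos hc
    -- numbers
    have hL1 : X.dist a c = ((es1.length + 1 : ℕ) : ℕ∞) := by
      rw [dist_comm, ← hg1.2]; simp
    have hL2 : X.dist c x = ((es2.length + 1 : ℕ) : ℕ∞) := by
      rw [← hg2.2]; simp
    have hdax := dist_ax hδpos hyp ht1 hg1 hg2 hang
    have hlen : (((l1 ++ e :: l2).length : ℕ) : ℕ∞)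
        = (((es1.length + 1) + (es2.length + 1) : ℕ) : ℕ∞) := by
      rw [hxa.2, dist_comm, hdax, hL1, hL2, ← Nat.cast_add]
    have hlen' : (l1 ++ e :: l2).length = (es1.length + 1) + (es2.length + 1) :=
      by exact_mod_cast hlen
    have he2 : ((e :: l2).length : ℕ∞) = ((es1.length + 1 : ℕ) : ℕ∞) := by
      rw [hs2.2, ← hoe, dist_comm, hde, hL1]
    have he2' : (e :: l2).length = es1.length + 1 := by exact_mod_cast he2
    have hn' : (n : ℕ∞) = ((es2.length + 1 : ℕ) : ℕ∞) := by
      rw [← hdxc, dist_comm, hL2]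
    have hn'' : n = es2.length + 1 := by exact_mod_cast hn'
    have hl1len : l1.length = n := by
      simp only [List.length_append, List.length_cons] at hlen'
      simp only [List.length_cons] at he2'
      omega
    rw [hoe, hcn, ← hl1len, List.take_left]

lemma wEnd_take_one {f : X.E} {fs : List X.E} {z : X.V} :
    X.wEnd z ((f :: fs).take 1) = X.t f := by simp

/-- two geodesics from `c` to `x` have their second vertices close, avoiding `c`. -/
lemma geods_from_c_close (hδpos : 0 < δ) (hyp : X.Hyperbolic δ)
    (ht1 : X.t e1 = c)
    (hg1 : X.IsGeodesic (X.rev e1 :: es1) c a)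
    (hg2 : X.IsGeodesic (e2 :: es2) c x)
    (hang : (((1000 * δ) ^ 2 : ℕ) : ℕ∞) < X.angle e1 e2)
    {f : X.E} {fs : List X.E} (hgf : X.IsGeodesic (f :: fs) c x) :
    AvoidWalk X c (X.t f) (X.t e2) (6 * δ) := by
  set gf : List X.E := f :: fs with hgfe
  set g2 : List X.E := e2 :: es2 with hg2e
  have hLL : gf.length = g2.length := by
    have := hgf.2.trans hg2.2.symm
    exact_mod_cast this
  have hL2 : 1 ≤ g2.length := by simp [hg2e]
  rcases le_or_gt g2.length (2 * δ + 1) with hsmall | hbig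
  · have h1 := geod_seg_avoid hgf (le_refl 1) (hLL ▸ hL2) (le_refl gf.length)
    rw [wEnd_take_one, List.take_length, hgf.1.wEnd_eq] at h1
    have h2 := geod_seg_avoid hg2 (le_refl 1) hL2 (le_refl g2.length)
    rw [wEnd_take_one, List.take_length, hg2.1.wEnd_eq] at h2
    exact (h1.trans h2.symm).mono (by omega)
  · set v := X.wEnd c (gf.take (2 * δ + 1)) with hv
    have hdcv : X.dist c v = ((2 * δ + 1 : ℕ) : ℕ∞) :=
      hgf.dist_take (by omega : 2 * δ + 1 ≤ gf.length)
    have hxx : X.IsGeodesic [] x x := ⟨rfl, by simp⟩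
    obtain ⟨w, hw_or, hdvw⟩ := hyp c x x gf [] g2 hgf hxx hg2 v
      (wEnd_take_mem_walkVerts _)
    have hw2 : w ∈ X.walkVerts c g2 := by
      rcases hw_or with hw | hw
      · simp only [walkVerts_nil, List.mem_singleton] at hw
        subst hw
        exact hg2.1.wEnd_eq ▸ wEnd_mem_walkVerts
      · exact hw
    obtain ⟨k, hk, hwk, hdcw⟩ := hg2.mem_pos hw2
    have hkb : ((2 * δ + 1 : ℕ) : ℕ∞) ≤ ((k + δ : ℕ) : ℕ∞) := by
      calc ((2 * δ + 1 : ℕ) : ℕ∞) = X.dist c v := hdcv.symm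
        _ ≤ X.dist c w + X.dist w v := dist_triangle _ _ _
        _ ≤ (k : ℕ∞) + (δ : ℕ∞) :=
            add_le_add hdcw.le ((dist_comm w v).trans_le hdvw)
        _ = ((k + δ : ℕ) : ℕ∞) := by push_cast; ring
    have hkb' : δ + 1 ≤ k := by have := Nat.cast_le.mp hkb; omega
    have hkub : ((k : ℕ) : ℕ∞) ≤ ((3 * δ + 1 : ℕ) : ℕ∞) := by
      calc ((k : ℕ) : ℕ∞) = X.dist c w := hdcw.symm
        _ ≤ X.dist c v + X.dist v w := dist_triangle _ _ _
        _ ≤ ((2 * δ + 1 : ℕ) : ℕ∞) + (δ : ℕ∞) := add_le_add hdcv.le hdvw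
        _ = ((3 * δ + 1 : ℕ) : ℕ∞) := by push_cast; ring
    have hkub' : k ≤ 3 * δ + 1 := Nat.cast_le.mp hkub
    have hseg1 : AvoidWalk X c (X.t f) v (2 * δ) := by
      have h1 := geod_seg_avoid hgf (le_refl 1) (by omega : 1 ≤ 2 * δ + 1)
        (by omega : 2 * δ + 1 ≤ gf.length)
      rw [wEnd_take_one] at h1
      exact h1.mono (by omega)
    have hhop : AvoidWalk X c v w δ :=
      hop_avoid hdvw (by rw [hdcv]; exact_mod_cast (by omega : δ < 2 * δ + 1))
    have hseg2 : AvoidWalk X c w (X.t e2) (k - 1) := by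
      have h1 := geod_seg_avoid hg2 (le_refl 1) (by omega : 1 ≤ k) hk
      rw [wEnd_take_one, ← hwk] at h1
      exact h1.symm
    exact ((hseg1.trans hhop).trans hseg2).mono (by omega)

/-- any point of the slice is `4δ`-close to `c`. -/
lemma dct (hδpos : 0 < δ) (hyp : X.Hyperbolic δ)
    (ht1 : X.t e1 = c)
    (hg1 : X.IsGeodesic (X.rev e1 :: es1) c a)
    (hg2 : X.IsGeodesic (e2 :: es2) c x)
    (hang : (((1000 * δ) ^ 2 : ℕ) : ℕ∞) < X.angle e1 e2)
    {t : X.V}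
    (h1 : X.dist x t + X.dist t a ≤ X.dist x a + ((2 * δ : ℕ) : ℕ∞))
    (h2 : X.dist a t = X.dist a c) :
    X.dist c t ≤ ((4 * δ : ℕ) : ℕ∞) := by
  set A : ℕ := es1.length + 1 with hA
  set B : ℕ := es2.length + 1 with hB
  have hdac : X.dist a c = (A : ℕ∞) := by rw [dist_comm, ← hg1.2]; simp [hA]
  have hdcx : X.dist c x = (B : ℕ∞) := by rw [← hg2.2]; simp [hB]
  have hdax := dist_ax hδpos hyp ht1 hg1 hg2 hang
  have hdax' : X.dist a x = ((A + B : ℕ) : ℕ∞) := by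
    rw [hdax, hdac, hdcx, ← Nat.cast_add]
  -- d(x,t) is finite and at most B + 2δ
  have hxt : X.dist x t ≤ ((B + 2 * δ : ℕ) : ℕ∞) := by
    have h3 : X.dist x t + (A : ℕ∞) ≤ ((A + B + 2 * δ : ℕ) : ℕ∞) := by
      calc X.dist x t + (A : ℕ∞) = X.dist x t + X.dist t a := by
            rw [dist_comm t a, h2, hdac]
        _ ≤ X.dist x a + ((2 * δ : ℕ) : ℕ∞) := h1
        _ = ((A + B + 2 * δ : ℕ) : ℕ∞) := by
            rw [dist_comm x a, hdax']; push_cast; ring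
    have hfin : X.dist x t ≠ ⊤ := by
      intro hh
      rw [hh, top_add, top_le_iff] at h3
      exact absurd h3 (ENat.coe_ne_top _)
    lift X.dist x t to ℕ using hfin with D hD
    rw [← Nat.cast_add, Nat.cast_le] at h3
    exact_mod_cast (by omega : D ≤ B + 2 * δ)
  have hxtfin : X.dist x t ≠ ⊤ := ne_top_of_le_ne_top (ENat.coe_ne_top _) hxt
  obtain ⟨q, hq⟩ := exists_geodesic hxtfin
  obtain ⟨τ, hτ⟩ := exists_geodesic (show X.dist a t ≠ ⊤ by rw [h2, hdac]; exact ENat.coe_ne_top _)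
  obtain ⟨γ, hγ⟩ := exists_geodesic (show X.dist a x ≠ ⊤ by rw [hdax']; exact ENat.coe_ne_top _)
  have hcγ := geo_through hδpos hyp ht1 hg1 hg2 hang hγ
  obtain ⟨w, hw_or, hdcw⟩ := hyp a x t γ q τ hγ hq hτ c hcγ
  -- lengths
  have hlτ : (τ.length : ℕ∞) = (A : ℕ∞) := by rw [hτ.2, h2, hdac]
  have hlτ' : τ.length = A := by exact_mod_cast hlτ
  have hlq : q.length ≤ B + 2 * δ := by
    have := hq.2.trans_le hxt
    exact_mod_cast this
  rcases hw_or with hwq | hwτ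
  · -- w on the geodesic from x to t
    obtain ⟨k, hk, hwk, hdxw⟩ := hq.mem_pos hwq
    have hdwt : X.dist w t = ((q.length - k : ℕ) : ℕ∞) := by
      rw [hwk]; exact hq.dist_drop hk
    have hBk : (B : ℕ∞) ≤ ((k + δ : ℕ) : ℕ∞) := by
      calc (B : ℕ∞) = X.dist x c := by rw [dist_comm, hdcx]
        _ ≤ X.dist x w + X.dist w c := dist_triangle _ _ _
        _ ≤ (k : ℕ∞) + (δ : ℕ∞) :=
            add_le_add hdxw.le ((dist_comm w c).trans_le hdcw)
        _ = ((k + δ : ℕ) : ℕ∞) := by push_cast; ring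
    have hBk' : B ≤ k + δ := Nat.cast_le.mp hBk
    calc X.dist c t ≤ X.dist c w + X.dist w t := dist_triangle _ _ _
      _ ≤ (δ : ℕ∞) + ((q.length - k : ℕ) : ℕ∞) := add_le_add hdcw hdwt.le
      _ ≤ ((4 * δ : ℕ) : ℕ∞) := by
          rw [show ((4 * δ : ℕ) : ℕ∞) = ((δ : ℕ) : ℕ∞) + ((3 * δ : ℕ) : ℕ∞) by
            push_cast; ring]
          exact add_le_add (le_refl _) (Nat.cast_le.mpr (by omega))
  · -- w on the geodesic from a to t
    obtain ⟨k, hk, hwk, hdaw⟩ := hτ.mem_pos hwτ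
    have hdwt : X.dist w t = ((τ.length - k : ℕ) : ℕ∞) := by
      rw [hwk]; exact hτ.dist_drop hk
    have hAk : (A : ℕ∞) ≤ ((k + δ : ℕ) : ℕ∞) := by
      calc (A : ℕ∞) = X.dist a c := hdac.symm
        _ ≤ X.dist a w + X.dist w c := dist_triangle _ _ _
        _ ≤ (k : ℕ∞) + (δ : ℕ∞) :=
            add_le_add hdaw.le ((dist_comm w c).trans_le hdcw)
        _ = ((k + δ : ℕ) : ℕ∞) := by push_cast; ring
    have hAk' : A ≤ k + δ := Nat.cast_le.mp hAk
    calc X.dist c t ≤ X.dist c w + X.dist w t := dist_triangle _ _ _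
      _ ≤ (δ : ℕ∞) + ((τ.length - k : ℕ) : ℕ∞) := add_le_add hdcw hdwt.le
      _ ≤ ((4 * δ : ℕ) : ℕ∞) := by
          rw [show ((4 * δ : ℕ) : ℕ∞) = ((δ : ℕ) : ℕ∞) + ((3 * δ : ℕ) : ℕ∞) by
            push_cast; ring]
          exact add_le_add (le_refl _) (Nat.cast_le.mpr (by omega))

/-- from `o e1` one can reach any `t ≠ c` of the slice avoiding `c`. -/
lemma reach_t (hδpos : 0 < δ) (hyp : X.Hyperbolic δ)
    (ht1 : X.t e1 = c)
    (hg1 : X.IsGeodesic (X.rev e1 :: es1) c a)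
    (hg2 : X.IsGeodesic (e2 :: es2) c x)
    (hang : (((1000 * δ) ^ 2 : ℕ) : ℕ∞) < X.angle e1 e2)
    {t : X.V} (h2 : X.dist a t = X.dist a c)
    (hct : X.dist c t ≤ ((4 * δ : ℕ) : ℕ∞)) (htc : t ≠ c) :
    AvoidWalk X c (X.o e1) t (12 * δ + 1) := by
  set g1 : List X.E := X.rev e1 :: es1 with hg1e
  set A : ℕ := es1.length + 1 with hA
  have hAg1 : g1.length = A := by simp [hg1e, hA]
  have hdac : X.dist a c = (A : ℕ∞) := by
    rw [dist_comm, ← hg1.2, hAg1]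
  obtain ⟨τ, hτ⟩ := exists_geodesic (show X.dist a t ≠ ⊤ by rw [h2, hdac]; exact ENat.coe_ne_top _)
  have hlτ : τ.length = A := by
    have h3 : (τ.length : ℕ∞) = (A : ℕ∞) := by rw [hτ.2, h2, hdac]
    exact_mod_cast h3
  -- τ avoids c
  have hcτ : c ∉ X.walkVerts a τ := by
    intro hcmem
    obtain ⟨n, hn, hcn, hdan⟩ := hτ.mem_pos hcmem
    have hnA : n = A := by
      have h3 := hdan.symm.trans hdac
      exact_mod_cast h3
    apply htc
    rw [hcn, hnA, ← hlτ, List.take_length, hτ.1.wEnd_eq]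
  -- σ : a geodesic from c to t
  obtain ⟨σ, hσ⟩ := exists_geodesic (ne_top_of_le_ne_top (ENat.coe_ne_top _) hct)
  have hlσ : σ.length ≤ 4 * δ := by
    have h3 : (σ.length : ℕ∞) ≤ ((4 * δ : ℕ) : ℕ∞) := hσ.2.trans_le hct
    exact_mod_cast h3
  have hwalkτ : AvoidWalk X c a t τ.length := ⟨τ, hτ.1, hcτ, le_refl _⟩
  rcases le_or_gt A (5 * δ + 1) with hsmall | hbig
  · -- go to a along g1, then along τ
    have h1 := geod_seg_avoid hg1 (le_refl 1) (by omega : 1 ≤ g1.length)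
      (le_refl g1.length)
    rw [v1_g1 hg1, List.take_length, hg1.1.wEnd_eq] at h1
    exact (h1.trans hwalkτ).mono (by omega)
  · set v := X.wEnd c (g1.take (5 * δ + 1)) with hv
    have hdcv : X.dist c v = ((5 * δ + 1 : ℕ) : ℕ∞) :=
      hg1.dist_take (by omega : 5 * δ + 1 ≤ g1.length)
    have hdva : X.dist v a = ((g1.length - (5 * δ + 1) : ℕ) : ℕ∞) :=
      hg1.dist_drop (by omega : 5 * δ + 1 ≤ g1.length)
    obtain ⟨w, hw_or, hdvw⟩ := hyp c a t g1 τ σ hg1 hτ hσ v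
      (wEnd_take_mem_walkVerts _)
    have hwτ : w ∈ X.walkVerts a τ := by
      rcases hw_or with hw | hw
      · exact hw
      · exfalso
        obtain ⟨k, hk, hwk, hdcw⟩ := hσ.mem_pos hw
        have h3 : ((5 * δ + 1 : ℕ) : ℕ∞) ≤ ((4 * δ + δ : ℕ) : ℕ∞) := by
          calc ((5 * δ + 1 : ℕ) : ℕ∞) = X.dist c v := hdcv.symm
            _ ≤ X.dist c w + X.dist w v := dist_triangle _ _ _
            _ ≤ ((4 * δ : ℕ) : ℕ∞) + (δ : ℕ∞) := by
                refine add_le_add ?_ ((dist_comm w v).trans_le hdvw)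
                rw [hdcw]
                exact Nat.cast_le.mpr (hk.trans hlσ)
            _ = ((4 * δ + δ : ℕ) : ℕ∞) := by push_cast; ring
        have := Nat.cast_le.mp h3
        omega
    obtain ⟨k, hk, hwk, hdaw⟩ := hτ.mem_pos hwτ
    -- k is large : A - k ≤ 6δ + 1
    have h4 : ((A - (5 * δ + 1) : ℕ) : ℕ∞) ≤ ((k + δ : ℕ) : ℕ∞) := by
      calc ((A - (5 * δ + 1) : ℕ) : ℕ∞) = X.dist a v := by
            rw [dist_comm, hdva, hAg1]
        _ ≤ X.dist a w + X.dist w v := dist_triangle _ _ _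
        _ ≤ (k : ℕ∞) + (δ : ℕ∞) :=
            add_le_add hdaw.le ((dist_comm w v).trans_le hdvw)
        _ = ((k + δ : ℕ) : ℕ∞) := by push_cast; ring
    have h4' : A - (5 * δ + 1) ≤ k + δ := Nat.cast_le.mp h4
    have hseg1 : AvoidWalk X c (X.o e1) v (5 * δ) := by
      have h1 := geod_seg_avoid hg1 (le_refl 1) (by omega : 1 ≤ 5 * δ + 1)
        (by omega : 5 * δ + 1 ≤ g1.length)
      rw [v1_g1 hg1] at h1
      exact h1.mono (by omega)
    have hhop : AvoidWalk X c v w δ :=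
      hop_avoid hdvw (by rw [hdcv]; exact_mod_cast (by omega : δ < 5 * δ + 1))
    have hseg2 : AvoidWalk X c w t (τ.length - k) := by
      have h1 := walk_seg_avoid hτ.1 hcτ hk (le_refl τ.length)
      rw [← hwk, List.take_length, hτ.1.wEnd_eq] at h1
      exact h1
    refine ((hseg1.trans hhop).trans hseg2).mono ?_
    have : τ.length - k ≤ 6 * δ + 1 := by omega
    omega

/-- a point in the cone around an edge `e` with origin `c` can be reached
from `t e` avoiding `c`. -/
lemma cone_reach {θ : ℕ} (hθ1 : 1 ≤ θ) {e : X.E} {tt : X.V}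
    (hcone : X.InConeV ((θ : ℕ) : ℕ∞) e tt) (hoe : X.o e = c) (hte : X.t e ≠ c)
    (htt : tt ≠ c) : AvoidWalk X c (X.t e) tt (θ * θ) := by
  obtain ⟨es, y, hw, hlen, hab, hmem⟩ := hcone
  have hlen' : es.length + 1 ≤ θ := by
    have h3 : (((e :: es).length : ℕ) : ℕ∞) ≤ ((θ : ℕ) : ℕ∞) := hlen
    have h4 : (e :: es).length ≤ θ := by exact_mod_cast h3
    simpa using h4
  have hmem' : tt ∈ X.walkVerts (X.t e) es := by
    simp only [walkVerts_cons, List.mem_cons] at hmem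
    rcases hmem with h | h
    · exact absurd (h.trans hoe) htt
    · exact h
  obtain ⟨n, hn, httn⟩ := mem_walkVerts_iff.1 hmem'
  have hwn : X.IsWalk (es.take n) (X.t e) tt := by
    rw [httn]; exact hw.2.take n
  have habn : X.AngleBounded ((θ : ℕ) : ℕ∞) (es.take n) :=
    angleBounded_take (angleBounded_tail hab)
  have h1 := detour c hθ1 (es.take n).length (es.take n) (X.t e) tt (le_refl _)
    hwn habn hte htt
  refine h1.mono ?_
  have h5 : (es.take n).length ≤ θ := by
    have := List.length_take_le n es
    omega
  exact Nat.mul_le_mul_left θ h5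


end Main

end MGraph

/-- if `∠_c(a,x) > (1000δ)²`, then the slice of `U_{2δ}[a,x]` at
distance `d(a,c)` from `a` is exactly the singleton `{c}`. -/
theorem stmt_11 (X : MGraph) (δ : ℕ) (hδpos : 0 < δ) (hδ : X.Hyperbolic δ)
    (hfine : X.Fine) (a x c : X.V)
    (h : X.AngleGT c a x ((((1000 * δ) ^ 2 : ℕ)) : ℕ∞)) :
    {t | t ∈ X.ConicalSet (2 * δ) a x ∧ X.dist a t = X.dist a c} = {c} := by
  open MGraph in
  have hyp := hδ
  obtain ⟨e1, e2, es1, es2, ht1, ho2, hg1, hg2, hang⟩ := h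
  have hdax := dist_ax hδpos hyp ht1 hg1 hg2 hang
  have hdac : X.dist a c = ((es1.length + 1 : ℕ) : ℕ∞) := by
    rw [dist_comm, ← hg1.2]; simp
  have hdcx : X.dist c x = ((es2.length + 1 : ℕ) : ℕ∞) := by
    rw [← hg2.2]; simp
  have hdax' : X.dist a x = ((es1.length + 1 + (es2.length + 1) : ℕ) : ℕ∞) := by
    rw [hdax, hdac, hdcx, ← Nat.cast_add]
  ext t
  simp only [Set.mem_setOf_eq, Set.mem_singleton_iff]
  constructor
  · rintro ⟨⟨hOn, hle, hcone⟩, hdt⟩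
    by_contra htc
    have hct := dct hδpos hyp ht1 hg1 hg2 hang hOn hdt
    have hreach := reach_t hδpos hyp ht1 hg1 hg2 hang hdt hct htc
    -- a geodesic from a to x, and its edge leaving c
    obtain ⟨γ, hγ⟩ := exists_geodesic
      (show X.dist a x ≠ ⊤ by rw [hdax']; exact ENat.coe_ne_top _)
    have hcγ := geo_through hδpos hyp ht1 hg1 hg2 hang hγ
    obtain ⟨n, hn, hcn, hdan⟩ := hγ.mem_pos hcγ
    have hdropG : X.IsGeodesic (γ.drop n) c x := by
      have h3 := hγ.drop n
      rw [← hcn] at h3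
      exact h3
    have hlen_drop : (γ.drop n).length = es2.length + 1 := by
      have h3 : ((γ.drop n).length : ℕ∞) = ((es2.length + 1 : ℕ) : ℕ∞) := by
        rw [hdropG.2, hdcx]
      exact_mod_cast h3
    obtain ⟨f, fs, hffs⟩ : ∃ f fs, γ.drop n = f :: fs := by
      cases hdrop : γ.drop n with
      | nil => rw [hdrop] at hlen_drop; simp at hlen_drop
      | cons f fs => exact ⟨f, fs, rfl⟩
    rw [hffs] at hdropG
    have hof : X.o f = c := hdropG.1.1
    have htf : X.t f ≠ c := by
      intro hh
      have h3 := hdropG.dist_take (n := 1) (by simp)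
      rw [wEnd_take_one, hh, dist_self] at h3
      exact absurd h3.symm (by simp)
    have hfmem : f ∈ γ := by
      have h4 : f ∈ γ.take n ++ γ.drop n := by
        rw [hffs]
        exact List.mem_append_right _ List.mem_cons_self
      rwa [List.take_append_drop] at h4
    have hedge : X.GeodEdgeAt a x (X.dist a t) f := ⟨by rw [hof, hdt], γ, Or.inl hγ, hfmem⟩
    have hconef := hcone f hedge
    have hrc := cone_reach (θ := 40 * (2 * δ)) (by omega) hconef hof htf htc
    have hclose := geods_from_c_close hδpos hyp ht1 hg1 hg2 hang hdropG
    have total := (hreach.trans hrc.symm).trans hclose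
    refine ang_contra ht1 hang ?_ total
    have h2 : δ ≤ δ * δ := Nat.le_mul_of_pos_left δ hδpos
    nlinarith [h2]
  · intro ht
    rw [ht]
    refine ⟨⟨?_, ?_, ?_⟩, rfl⟩
    · show X.dist x c + X.dist c a ≤ X.dist x a + _
      rw [dist_comm x c, dist_comm c a, dist_comm x a, hdax, add_comm (X.dist a c)]
      exact le_self_add
    · rw [hdax]
      exact le_self_add
    · rintro e ⟨hde, es, hor, hmem⟩
      have hoe := geodEdge_origin hδpos hyp ht1 hg1 hg2 hang hor hmem hde
      refine ⟨[], X.t e, ⟨rfl, rfl⟩, ?_, trivial, ?_⟩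
      · show ((1 : ℕ) : ℕ∞) ≤ _
        exact_mod_cast (by omega : (1 : ℕ) ≤ 40 * (2 * δ))
      · simp [hoe]
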